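/- Gradient of the Newtonian potential of a uniform ball at an exterior point: for x ∈ ℝ³ with ‖x‖ = a > R, ∇_x ∫_{B_R(0)} dy/‖x − y‖ = −(4π/3) R³ x/‖x‖³. -/

import Mathlib

open MeasureTheory Real

lemma aux_inner_1d {b s : ℝ} (hb : 0 < b) (hs : 0 ≤ s) :
    ∫ r in (0:ℝ)..s, r * (Real.sqrt (b^2 + r^2))⁻¹ = Real.sqrt (b^2 + s^2) - b := by
  have hne : ∀ r : ℝ, b^2 + r^2 ≠ 0 := fun r => by positivity
  have hderiv : ∀ r ∈ Set.uIcc (0:ℝ) s,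
      HasDerivAt (fun r => Real.sqrt (b^2 + r^2)) (r * (Real.sqrt (b^2 + r^2))⁻¹) r := by
    intro r _
    have h1 : HasDerivAt (fun r : ℝ => b^2 + r^2) (2*r) r := by
      simpa using ((hasDerivAt_pow 2 r).const_add (b^2))
    have h2 := (Real.hasDerivAt_sqrt (hne r)).comp r h1
    convert! h2 using 1
    have : Real.sqrt (b^2 + r^2) ≠ 0 := by positivity
    field_simp
  have hint : IntervalIntegrable (fun r : ℝ => r * (Real.sqrt (b^2 + r^2))⁻¹)
      volume 0 s := by
    apply Continuous.intervalIntegrable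
    exact continuous_id.mul ((continuous_const.add (continuous_pow 2)).sqrt.inv₀
      (fun r => (Real.sqrt_pos.2 (show (0:ℝ) < b^2 + r^2 by nlinarith [sq_nonneg r, mul_pos hb hb])).ne'))
  rw [intervalIntegral.integral_eq_sub_of_hasDerivAt hderiv hint]
  simp [Real.sqrt_sq hb.le]

lemma aux_outer_1d {a R : ℝ} (hR : 0 < R) (h : R < a) :
    ∫ t in (-R)..R, (Real.sqrt (a^2 - 2*a*t + R^2) - (a - t)) = 2*R^3/(3*a) := by
  have ha : 0 < a := hR.trans h
  set Φ : ℝ → ℝ := fun t =>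
    -((a^2 - 2*a*t + R^2) * Real.sqrt (a^2 - 2*a*t + R^2))/(3*a) - a*t + t^2/2 with hΦ
  have hderiv : ∀ t ∈ Set.uIcc (-R) R,
      HasDerivAt Φ (Real.sqrt (a^2 - 2*a*t + R^2) - (a - t)) t := by
    intro t ht
    rw [Set.uIcc_of_le (by linarith)] at ht
    obtain ⟨ht1, ht2⟩ := ht
    have hg : 0 < a^2 - 2*a*t + R^2 := by nlinarith
    have h1 : HasDerivAt (fun t : ℝ => a^2 - 2*a*t + R^2) (-(2*a)) t := by
      simpa using (((hasDerivAt_id t).const_mul (2*a)).const_sub (a^2)).add_const (R^2)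
    have h2 := (Real.hasDerivAt_sqrt hg.ne').comp t h1
    have h3 := h1.mul h2
    have h4 := ((h3.div_const (3*a)).neg.sub ((hasDerivAt_id t).const_mul a)).add
      ((hasDerivAt_pow 2 t).div_const 2)
    convert! h4 using 1
    · funext x
      simp only [Function.comp_apply, id_eq, hΦ, Pi.add_apply, Pi.sub_apply, Pi.neg_apply, Pi.mul_apply]
      ring
    simp only [Function.comp_apply, id_eq]
    set u := Real.sqrt (a^2 - 2*a*t + R^2) with hu
    have hs : u ≠ 0 := by rw [hu]; positivity
    have hsq : u * u = a^2 - 2*a*t + R^2 := Real.mul_self_sqrt hg.le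
    rw [← hsq]
    field_simp
    ring
  have hint : IntervalIntegrable (fun t : ℝ => Real.sqrt (a^2 - 2*a*t + R^2) - (a - t))
      volume (-R) R := by
    apply Continuous.intervalIntegrable
    exact ((continuous_const.sub (continuous_const.mul continuous_id)).add
      continuous_const).sqrt.sub (continuous_const.sub continuous_id)
  rw [intervalIntegral.integral_eq_sub_of_hasDerivAt hderiv hint]
  have e1 : a^2 - 2*a*R + R^2 = (a-R)^2 := by ring
  have e2 : a^2 - 2*a*(-R) + R^2 = (a+R)^2 := by ring
  rw [hΦ]
  simp only [e1, e2, Real.sqrt_sq (by linarith : (0:ℝ) ≤ a - R),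
    Real.sqrt_sq (by linarith : (0:ℝ) ≤ a + R)]
  field_simp
  ring

lemma aux_disc {b s : ℝ} (hb : 0 < b) (hs : 0 < s) :
    ∫ w : ℝ × ℝ, (if w.1^2 + w.2^2 < s^2 then (Real.sqrt (b^2 + w.1^2 + w.2^2))⁻¹ else 0)
      = 2 * π * (Real.sqrt (b^2 + s^2) - b) := by
  rw [← integral_comp_polarCoord_symm]
  have htgt : polarCoord.target = Set.Ioi (0:ℝ) ×ˢ Set.Ioo (-π) π := rfl
  have hsymm : ∀ p : ℝ × ℝ, polarCoord.symm p = (p.1 * Real.cos p.2, p.1 * Real.sin p.2) :=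
    fun p => rfl
  have h1 : ∀ p ∈ Set.Ioi (0:ℝ) ×ˢ Set.Ioo (-π) π,
      (p.1 • if (polarCoord.symm p).1^2 + (polarCoord.symm p).2^2 < s^2 then
        (Real.sqrt (b^2 + (polarCoord.symm p).1^2 + (polarCoord.symm p).2^2))⁻¹ else 0)
      = (fun r : ℝ => r * if r^2 < s^2 then (Real.sqrt (b^2 + r^2))⁻¹ else 0) p.1
          * (fun _ : ℝ => (1:ℝ)) p.2 := by
    intro p hp
    rw [hsymm]
    have key : (p.1 * Real.cos p.2)^2 + (p.1 * Real.sin p.2)^2 = p.1^2 := by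
      rw [mul_pow, mul_pow, ← mul_add, Real.cos_sq_add_sin_sq, mul_one]
    simp only [smul_eq_mul, mul_one]
    rw [add_assoc, key]
  rw [htgt, setIntegral_congr_fun (measurableSet_Ioi.prod measurableSet_Ioo) h1,
    Measure.volume_eq_prod,
    setIntegral_prod_mul (fun r : ℝ => r * if r^2 < s^2 then (Real.sqrt (b^2 + r^2))⁻¹ else 0)
      (fun _ : ℝ => (1:ℝ))]
  have h2 : ∫ θ in Set.Ioo (-π) π, (1:ℝ) = 2 * π := by
    rw [MeasureTheory.setIntegral_const, smul_eq_mul, mul_one, Real.volume_real_Ioo_of_le (by linarith [pi_pos] : -π ≤ π)]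
    ring
  rw [h2]
  have h3 : ∫ r in Set.Ioi (0:ℝ), (r * if r^2 < s^2 then (Real.sqrt (b^2 + r^2))⁻¹ else 0)
      = Real.sqrt (b^2 + s^2) - b := by
    have heq : ∀ r ∈ Set.Ioi (0:ℝ),
        (r * if r^2 < s^2 then (Real.sqrt (b^2 + r^2))⁻¹ else 0)
        = (Set.Ioo (0:ℝ) s).indicator (fun r => r * (Real.sqrt (b^2 + r^2))⁻¹) r := by
      intro r hr
      simp only [Set.mem_Ioi] at hr
      by_cases h : r < s
      · rw [if_pos (by nlinarith), Set.indicator_of_mem (Set.mem_Ioo.2 ⟨hr, h⟩)]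
      · rw [if_neg (by push_neg at h ⊢; nlinarith), Set.indicator_of_notMem
          (by simp only [Set.mem_Ioo, not_and]; intro _; linarith [le_of_not_gt h]), mul_zero]
    rw [setIntegral_congr_fun measurableSet_Ioi heq,
      setIntegral_indicator measurableSet_Ioo,
      Set.inter_eq_self_of_subset_right Set.Ioo_subset_Ioi_self,
      ← MeasureTheory.integral_Ioc_eq_integral_Ioo,
      ← intervalIntegral.integral_of_le hs.le]
    exact aux_inner_1d hb hs.le
  rw [h3]
  ring

lemma aux_G_integral {a R : ℝ} (hR : 0 < R) (h : R < a)
    (hG : Integrable (fun z : ℝ × ℝ × ℝ =>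
      if z.1^2 + z.2.1^2 + z.2.2^2 < R^2 then
        (Real.sqrt ((a - z.1)^2 + z.2.1^2 + z.2.2^2))⁻¹ else 0)) :
    ∫ z : ℝ × ℝ × ℝ, (if z.1^2 + z.2.1^2 + z.2.2^2 < R^2 then
        (Real.sqrt ((a - z.1)^2 + z.2.1^2 + z.2.2^2))⁻¹ else 0)
      = 4 * π * R^3 / (3*a) := by
  have ha : 0 < a := hR.trans h
  rw [Measure.volume_eq_prod] at hG ⊢
  rw [MeasureTheory.integral_prod _ hG]
  have hinner : ∀ t : ℝ,
      (∫ w : ℝ × ℝ, (if t^2 + w.1^2 + w.2^2 < R^2 then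
          (Real.sqrt ((a - t)^2 + w.1^2 + w.2^2))⁻¹ else 0))
      = if t^2 < R^2 then
          2 * π * (Real.sqrt (a^2 - 2*a*t + R^2) - (a - t)) else 0 := by
    intro t
    by_cases ht : t^2 < R^2
    · obtain ⟨h1, h2⟩ := abs_lt_of_sq_lt_sq' ht hR.le
      rw [if_pos ht]
      have hb : 0 < a - t := by linarith
      have hs : 0 < Real.sqrt (R^2 - t^2) := Real.sqrt_pos.2 (by nlinarith)
      have hs2 : Real.sqrt (R^2 - t^2) ^ 2 = R^2 - t^2 := Real.sq_sqrt (by nlinarith)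
      have hconv : ∀ w : ℝ × ℝ,
          (if t^2 + w.1^2 + w.2^2 < R^2 then (Real.sqrt ((a - t)^2 + w.1^2 + w.2^2))⁻¹ else 0)
          = (if w.1^2 + w.2^2 < (Real.sqrt (R^2 - t^2))^2 then
              (Real.sqrt ((a-t)^2 + w.1^2 + w.2^2))⁻¹ else 0) := by
        intro w
        rw [hs2]
        congr 1
        rw [eq_iff_iff]
        constructor <;> intro hh <;> linarith
      calc (∫ w : ℝ × ℝ, (if t^2 + w.1^2 + w.2^2 < R^2 then
              (Real.sqrt ((a - t)^2 + w.1^2 + w.2^2))⁻¹ else 0))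
          = ∫ w : ℝ × ℝ, (if w.1^2 + w.2^2 < (Real.sqrt (R^2 - t^2))^2 then
              (Real.sqrt ((a-t)^2 + w.1^2 + w.2^2))⁻¹ else 0) :=
            integral_congr_ae (Filter.Eventually.of_forall hconv)
        _ = 2 * π * (Real.sqrt ((a-t)^2 + (Real.sqrt (R^2 - t^2))^2) - (a-t)) := aux_disc hb hs
        _ = 2 * π * (Real.sqrt (a^2 - 2*a*t + R^2) - (a - t)) := by
            rw [hs2, show (a-t)^2 + (R^2 - t^2) = a^2 - 2*a*t + R^2 by ring]
    · rw [if_neg ht]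
      have : ∀ w : ℝ × ℝ, (if t^2 + w.1^2 + w.2^2 < R^2 then
          (Real.sqrt ((a - t)^2 + w.1^2 + w.2^2))⁻¹ else 0) = 0 := by
        intro w
        rw [if_neg]
        push_neg at ht ⊢
        nlinarith [sq_nonneg w.1, sq_nonneg w.2]
      simp only [this, integral_zero]
  calc ∫ t : ℝ, ∫ w : ℝ × ℝ, (if t^2 + w.1^2 + w.2^2 < R^2 then
          (Real.sqrt ((a - t)^2 + w.1^2 + w.2^2))⁻¹ else 0)
        = ∫ t : ℝ, (if t^2 < R^2 then
            2 * π * (Real.sqrt (a^2 - 2*a*t + R^2) - (a - t)) else 0) := by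
          exact integral_congr_ae (Filter.Eventually.of_forall hinner)
    _ = ∫ t in Set.Ioo (-R) R, 2 * π * (Real.sqrt (a^2 - 2*a*t + R^2) - (a - t)) := by
          rw [← MeasureTheory.integral_indicator measurableSet_Ioo]
          congr 1
          funext t
          by_cases ht : t^2 < R^2
          · obtain ⟨h1, h2⟩ := abs_lt_of_sq_lt_sq' ht hR.le
            rw [if_pos ht, Set.indicator_of_mem (Set.mem_Ioo.2 ⟨h1, h2⟩)]
          · rw [if_neg ht, Set.indicator_of_notMem]
            simp only [Set.mem_Ioo, not_and]
            intro h1 h2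
            exact absurd (by nlinarith : t^2 < R^2) ht
    _ = 4 * π * R^3 / (3*a) := by
          rw [← MeasureTheory.integral_Ioc_eq_integral_Ioo,
            ← intervalIntegral.integral_of_le (by linarith : -R ≤ R),
            intervalIntegral.integral_const_mul, aux_outer_1d hR h]
          field_simp
          ring

section Shell

local notation "E3" => EuclideanSpace ℝ (Fin 3)

-- the measure preserving chain (Fin 3 → ℝ) ≃ ℝ × ℝ × ℝ
noncomputable def ψ : (Fin 3 → ℝ) ≃ᵐ ℝ × (ℝ × ℝ) :=
  (MeasurableEquiv.piFinSuccAbove (fun _ : Fin 3 => ℝ) 0).trans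
    ((MeasurableEquiv.refl ℝ).prodCongr (MeasurableEquiv.finTwoArrow))

lemma ψ_measurePreserving : MeasurePreserving ψ (volume) (volume) := by
  have h1 := volume_preserving_piFinSuccAbove (fun _ : Fin 3 => ℝ) 0
  have h2 : MeasurePreserving
      ((MeasurableEquiv.refl ℝ).prodCongr (MeasurableEquiv.finTwoArrow : (Fin 2 → ℝ) ≃ᵐ ℝ × ℝ))
      volume volume := by
    rw [Measure.volume_eq_prod, Measure.volume_eq_prod]
    exact (MeasurePreserving.id volume).prod (volume_preserving_finTwoArrow ℝ)
  exact h2.comp h1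

lemma ψ_apply (v : Fin 3 → ℝ) : ψ v = (v 0, (v 1, v 2)) := by
  simp [ψ, MeasurableEquiv.piFinSuccAbove, MeasurableEquiv.finTwoArrow,
    MeasurableEquiv.prodCongr, Fin.zero_succAbove, Fin.tail]

lemma shell_integral {R : ℝ} (hR : 0 < R) (z : E3) (hz : R < ‖z‖) :
    ∫ y in Metric.ball (0 : E3) R, ‖z - y‖⁻¹ = 4 * π * R^3 / (3 * ‖z‖) := by
  set a : ℝ := ‖z‖ with ha
  have ha0 : 0 < a := hR.trans hz
  set u : E3 := a • EuclideanSpace.single (0 : Fin 3) (1:ℝ) with hu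
  have hnu : ‖u‖ = a := by
    rw [hu, norm_smul, EuclideanSpace.norm_single, norm_one, mul_one, Real.norm_eq_abs,
      abs_of_pos ha0]
  -- Step 1: rotate z to u
  have step1 : ∫ y in Metric.ball (0 : E3) R, ‖z - y‖⁻¹
      = ∫ y in Metric.ball (0 : E3) R, ‖u - y‖⁻¹ := by
    set T := Submodule.reflection (ℝ ∙ (u - z))ᗮ with hT
    have hTu : T u = z := Submodule.reflection_sub (by rw [hnu, ha])
    have hmp : MeasurePreserving T volume volume :=
      (T : E3 ≃ₗᵢ[ℝ] E3).measurePreserving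
    have hemb : MeasurableEmbedding T :=
      (T : E3 ≃ₗᵢ[ℝ] E3).toHomeomorph.measurableEmbedding
    have hpre : T ⁻¹' (Metric.ball (0 : E3) R) = Metric.ball (0 : E3) R := by
      ext w
      simp [mem_ball_zero_iff, T.norm_map]
    calc ∫ y in Metric.ball (0 : E3) R, ‖z - y‖⁻¹
        = ∫ y in T ⁻¹' (Metric.ball (0 : E3) R), ‖z - T y‖⁻¹ :=
          (hmp.setIntegral_preimage_emb hemb (fun w => ‖z - w‖⁻¹) _).symm
      _ = ∫ y in Metric.ball (0 : E3) R, ‖u - y‖⁻¹ := by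
          rw [hpre]
          congr 1
          funext y
          rw [← hTu, ← map_sub, T.norm_map]
  rw [step1]
  -- Step 2: transfer to (Fin 3 → ℝ)
  have hφ := (EuclideanSpace.volume_preserving_symm_measurableEquiv_toLp (Fin 3)).symm
  set φ := (MeasurableEquiv.toLp 2 (Fin 3 → ℝ)) with hφdef
  have hptwise : ∀ v : Fin 3 → ℝ,
      (Metric.ball (0 : E3) R).indicator (fun y => ‖u - y‖⁻¹) (φ v)
      = (fun w : ℝ × ℝ × ℝ => if w.1^2 + w.2.1^2 + w.2.2^2 < R^2 then
          (Real.sqrt ((a - w.1)^2 + w.2.1^2 + w.2.2^2))⁻¹ else 0) (ψ v) := by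
    intro v
    have hφv : ∀ i, (φ v) i = v i := fun i => rfl
    have hmem : φ v ∈ Metric.ball (0 : E3) R ↔ v 0^2 + v 1^2 + v 2^2 < R^2 := by
      rw [mem_ball_zero_iff, EuclideanSpace.norm_eq]
      rw [show ∑ i, ‖(φ v) i‖^2 = v 0^2 + v 1^2 + v 2^2 by
        simp [Fin.sum_univ_three, hφv, sq_abs]]
      exact Real.sqrt_lt' hR
    have hnorm : ‖u - φ v‖ = Real.sqrt ((a - v 0)^2 + v 1^2 + v 2^2) := by
      rw [EuclideanSpace.norm_eq]
      congr 1
      simp [Fin.sum_univ_three, EuclideanSpace.single_apply, sq_abs, hu, hφv]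
      try ring
    rw [ψ_apply]
    dsimp only
    by_cases hm : φ v ∈ Metric.ball (0 : E3) R
    · rw [Set.indicator_of_mem hm, if_pos (hmem.1 hm), hnorm]
    · rw [Set.indicator_of_notMem hm, if_neg (fun hc => hm (hmem.2 hc))]
  -- integrability
  have hbd : IntegrableOn (fun y : E3 => ‖u - y‖⁻¹) (Metric.ball (0 : E3) R) := by
    apply Measure.integrableOn_of_bounded (M := (a - R)⁻¹) (measure_ball_lt_top).ne
      ((((continuous_const.sub continuous_id).norm).measurable.inv).aestronglyMeasurable)
    · rw [ae_restrict_iff' measurableSet_ball]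
      refine Filter.Eventually.of_forall (fun y hy => ?_)
      rw [mem_ball_zero_iff] at hy
      have h1 : a - R ≤ ‖u - y‖ := by
        have := norm_sub_norm_le u y
        linarith [hnu ▸ this]
      show ‖‖u - y‖⁻¹‖ ≤ (a - R)⁻¹
      rw [Real.norm_eq_abs, abs_of_nonneg (inv_nonneg.2 (norm_nonneg _))]
      exact inv_anti₀ (by linarith) h1
  have hind : Integrable ((Metric.ball (0 : E3) R).indicator (fun y => ‖u - y‖⁻¹)) :=
    (integrable_indicator_iff measurableSet_ball).2 hbd
  have hcompφ : Integrable (fun v : Fin 3 → ℝ =>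
      (Metric.ball (0 : E3) R).indicator (fun y => ‖u - y‖⁻¹) (φ v)) :=
    (hφ.integrable_comp_emb (MeasurableEquiv.toLp 2 (Fin 3 → ℝ)).measurableEmbedding).2
      hind
  have hG : Integrable (fun w : ℝ × ℝ × ℝ => if w.1^2 + w.2.1^2 + w.2.2^2 < R^2 then
      (Real.sqrt ((a - w.1)^2 + w.2.1^2 + w.2.2^2))⁻¹ else 0) := by
    rw [← ψ_measurePreserving.integrable_comp_emb ψ.measurableEmbedding]
    have : (fun w : ℝ × ℝ × ℝ => if w.1^2 + w.2.1^2 + w.2.2^2 < R^2 then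
        (Real.sqrt ((a - w.1)^2 + w.2.1^2 + w.2.2^2))⁻¹ else 0) ∘ ψ
        = fun v : Fin 3 → ℝ =>
          (Metric.ball (0 : E3) R).indicator (fun y => ‖u - y‖⁻¹) (φ v) := by
      funext v; exact (hptwise v).symm
    rw [this]
    exact hcompφ
  calc ∫ y in Metric.ball (0 : E3) R, ‖u - y‖⁻¹
      = ∫ y, (Metric.ball (0 : E3) R).indicator (fun y => ‖u - y‖⁻¹) y :=
        (MeasureTheory.integral_indicator measurableSet_ball).symm
    _ = ∫ v : Fin 3 → ℝ, (Metric.ball (0 : E3) R).indicator (fun y => ‖u - y‖⁻¹) (φ v) :=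
        (hφ.integral_comp (MeasurableEquiv.toLp 2 (Fin 3 → ℝ)).measurableEmbedding _).symm
    _ = ∫ v : Fin 3 → ℝ, (fun w : ℝ × ℝ × ℝ => if w.1^2 + w.2.1^2 + w.2.2^2 < R^2 then
          (Real.sqrt ((a - w.1)^2 + w.2.1^2 + w.2.2^2))⁻¹ else 0) (ψ v) :=
        integral_congr_ae (Filter.Eventually.of_forall hptwise)
    _ = ∫ w : ℝ × ℝ × ℝ, (if w.1^2 + w.2.1^2 + w.2.2^2 < R^2 then
          (Real.sqrt ((a - w.1)^2 + w.2.1^2 + w.2.2^2))⁻¹ else 0) :=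
        ψ_measurePreserving.integral_comp ψ.measurableEmbedding
          (fun w : ℝ × ℝ × ℝ => if w.1^2 + w.2.1^2 + w.2.2^2 < R^2 then
            (Real.sqrt ((a - w.1)^2 + w.2.1^2 + w.2.2^2))⁻¹ else 0)
    _ = 4 * π * R^3 / (3 * a) := aux_G_integral hR hz hG

end Shell

local notation "E3" => EuclideanSpace ℝ (Fin 3)

lemma gradient_const_mul_inv_norm (c : ℝ) (x : E3) (hx0 : x ≠ 0) :
    HasGradientAt (fun z : E3 => c * ‖z‖⁻¹) ((-c / ‖x‖^3) • x) x := by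
  have hx : ‖x‖ ≠ 0 := norm_ne_zero_iff.2 hx0
  have hxpos : 0 < ‖x‖ := norm_pos_iff.2 hx0
  have hinner : @inner ℝ _ _ x x = ‖x‖^2 := real_inner_self_eq_norm_sq x
  have hinne : @inner ℝ _ _ x x ≠ 0 := by rw [hinner]; positivity
  have h1 : HasFDerivAt (fun z : E3 => @inner ℝ _ _ z z)
      ((fderivInnerCLM ℝ (x, x)).comp ((ContinuousLinearMap.id ℝ E3).prod
        (ContinuousLinearMap.id ℝ E3))) x :=
    (hasFDerivAt_id x).inner ℝ (hasFDerivAt_id x)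
  have h2 := HasDerivAt.comp_hasFDerivAt (f := fun z : E3 => (inner ℝ z z : ℝ)) x
    (Real.hasDerivAt_sqrt hinne) h1
  have hfun : ((fun t : ℝ => Real.sqrt t) ∘ fun z : E3 => (@inner ℝ _ _ z z : ℝ)) = fun z : E3 => ‖z‖ := by
    funext z
    simp only [Function.comp_apply]
    rw [real_inner_self_eq_norm_mul_norm, Real.sqrt_mul_self (norm_nonneg z)]
  have hsx : Real.sqrt (@inner ℝ _ _ x x) = ‖x‖ := by
    rw [real_inner_self_eq_norm_mul_norm, Real.sqrt_mul_self (norm_nonneg x)]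
  rw [hfun] at h2
  have h3 := (HasDerivAt.comp_hasFDerivAt (f := fun z : E3 => ‖z‖) x (hasDerivAt_inv hx) h2).const_mul c
  rw [hasGradientAt_iff_hasFDerivAt]
  convert! h3 using 1
  ext w
  simp only [ContinuousLinearMap.coe_smul', Pi.smul_apply, ContinuousLinearMap.coe_comp',
    Function.comp_apply, ContinuousLinearMap.prod_apply, ContinuousLinearMap.coe_id', id_eq,
    fderivInnerCLM_apply, smul_eq_mul, InnerProductSpace.toDual_apply_apply, hsx]
  rw [real_inner_smul_left, real_inner_comm x w]
  field_simp
  ring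

/-- Gradient of the Newtonian potential of a uniform ball at an exterior point:
`∇_x ∫_{B_R(0)} dy/‖x−y‖ = −(4π/3) R³ x/‖x‖³`. -/
theorem gradient_newtonian_potential_exterior {R : ℝ} (hR : 0 < R)
    (x : EuclideanSpace ℝ (Fin 3)) (hx : R < ‖x‖) :
    gradient (fun z => ∫ y in Metric.ball (0 : EuclideanSpace ℝ (Fin 3)) R, ‖z - y‖⁻¹) x
      = (-(4 * π / 3) * R ^ 3 / ‖x‖ ^ 3) • x := by
  have hx0 : x ≠ 0 := by
    intro h
    rw [h, norm_zero] at hx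
    linarith
  have hev : (fun z : EuclideanSpace ℝ (Fin 3) =>
        ∫ y in Metric.ball (0 : EuclideanSpace ℝ (Fin 3)) R, ‖z - y‖⁻¹)
      =ᶠ[nhds x] (fun z => (4 * π * R^3 / 3) * ‖z‖⁻¹) := by
    have hU : IsOpen {z : EuclideanSpace ℝ (Fin 3) | R < ‖z‖} :=
      isOpen_lt continuous_const continuous_norm
    refine Filter.eventuallyEq_of_mem (hU.mem_nhds hx) (fun z hz => ?_)
    have hz' : R < ‖z‖ := hz
    have hzne : ‖z‖ ≠ 0 := (hR.trans hz').ne'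
    rw [shell_integral hR z hz']
    field_simp
  rw [hev.gradient_eq, (gradient_const_mul_inv_norm (4 * π * R^3 / 3) x hx0).gradient]
  congr 1
  ring
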